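/- arXiv:2601.20651 — 3 statements merged into one kernel-verified Lean document; each statement's English description precedes it below -/
import Mathlib

section
/- For p > 1, a > 0, λ > 0 and v₀ > v₀* = sqrt(λ(p−1)/(p+1))·(λ/a)^{1/(p−1)}, the improper integral ∫₀^∞ ds / sqrt(v₀² − λs² + (2a/(p+1))s^{p+1}) is finite. -/
open Real MeasureTheory

/-- For `p > 1`, `a > 0`, `λ > 0` and `v₀ > v₀*`, the improper integral
`∫₀^∞ ds / sqrt(v₀² − λs² + (2a/(p+1))s^{p+1})` is finite. -/
theorem stmt5 (p a l v₀ : ℝ) (hp : 1 < p) (ha : 0 < a) (hl : 0 < l)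
    (hv₀ : Real.sqrt (l * (p - 1) / (p + 1)) * (l / a) ^ (1 / (p - 1)) < v₀) :
    IntegrableOn
      (fun s : ℝ => 1 / Real.sqrt (v₀ ^ 2 - l * s ^ 2 + (2 * a / (p + 1)) * s ^ (p + 1)))
      (Set.Ioi 0) := by
  have hp1 : (0:ℝ) < p + 1 := by linarith
  have hpm : (0:ℝ) < p - 1 := by linarith
  set K : ℝ := l * (p - 1) / (p + 1) * (l / a) ^ (2 / (p - 1)) with hKdef
  -- (v₀*)² = K
  have hK2 : (Real.sqrt (l * (p - 1) / (p + 1)) * (l / a) ^ (1 / (p - 1))) ^ 2 = K := by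
    rw [mul_pow, Real.sq_sqrt (by positivity), ← Real.rpow_natCast ((l / a) ^ (1 / (p - 1))) 2,
      ← Real.rpow_mul (by positivity)]
    rw [show (1 / (p - 1)) * ((2:ℕ):ℝ) = 2 / (p - 1) by push_cast; ring]
  -- key Young-type inequality
  have hKQ : ∀ s : ℝ, 0 ≤ s → l * s ^ 2 ≤ 2 * a / (p + 1) * s ^ (p + 1) + K := by
    intro s hs
    have hw : 2 / (p + 1) + (p - 1) / (p + 1) = 1 := by field_simp; try ring
    have h := Real.geom_mean_le_arith_mean2_weighted
      (by positivity : (0:ℝ) ≤ 2 / (p + 1)) (by positivity : (0:ℝ) ≤ (p - 1) / (p + 1))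
      (by positivity : (0:ℝ) ≤ a * s ^ (p + 1))
      (by positivity : (0:ℝ) ≤ l * (l / a) ^ (2 / (p - 1))) hw
    have e1 : (s ^ (p + 1)) ^ ((2:ℝ) / (p + 1)) = s ^ (2:ℕ) := by
      rw [← Real.rpow_mul hs, show (p + 1) * ((2:ℝ) / (p + 1)) = ((2:ℕ):ℝ) by push_cast; field_simp,
        Real.rpow_natCast]
    have e2 : ((l / a) ^ ((2:ℝ) / (p - 1))) ^ ((p - 1) / (p + 1))
        = l ^ ((2:ℝ) / (p + 1)) / a ^ ((2:ℝ) / (p + 1)) := by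
      rw [← Real.rpow_mul (by positivity),
        show (2:ℝ) / (p - 1) * ((p - 1) / (p + 1)) = 2 / (p + 1) by field_simp; try ring,
        Real.div_rpow hl.le ha.le]
    have e3 : l ^ ((p - 1) / (p + 1)) * l ^ ((2:ℝ) / (p + 1)) = l := by
      rw [← Real.rpow_add hl, show (p - 1) / (p + 1) + (2:ℝ) / (p + 1) = 1 by field_simp; try ring,
        Real.rpow_one]
    have hL : (a * s ^ (p + 1)) ^ ((2:ℝ) / (p + 1))
        * (l * (l / a) ^ ((2:ℝ) / (p - 1))) ^ ((p - 1) / (p + 1)) = l * s ^ 2 := by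
      rw [Real.mul_rpow ha.le (by positivity), Real.mul_rpow hl.le (by positivity), e1, e2]
      have haw : (0:ℝ) < a ^ ((2:ℝ) / (p + 1)) := Real.rpow_pos_of_pos ha _
      field_simp
      linear_combination s ^ 2 * e3
    rw [hL] at h
    rw [hKdef]
    have hre : 2 / (p + 1) * (a * s ^ (p + 1)) + (p - 1) / (p + 1) * (l * (l / a) ^ ((2:ℝ) / (p - 1)))
        = 2 * a / (p + 1) * s ^ (p + 1) + l * (p - 1) / (p + 1) * (l / a) ^ (2 / (p - 1)) := by
      ring
    rw [← hre]
    exact h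
  -- v₀² > K
  have hvs0 : 0 ≤ Real.sqrt (l * (p - 1) / (p + 1)) * (l / a) ^ (1 / (p - 1)) := by positivity
  have hKv : K < v₀ ^ 2 := by
    rw [← hK2]
    exact pow_lt_pow_left₀ hv₀ hvs0 (by norm_num)
  set C : ℝ := v₀ ^ 2 - K with hCdef
  have hC : 0 < C := by simp [hCdef]; linarith
  -- lower bound for the radicand
  have hQpos : ∀ s : ℝ, 0 ≤ s →
      C ≤ v₀ ^ 2 - l * s ^ 2 + 2 * a / (p + 1) * s ^ (p + 1) := by
    intro s hs
    have := hKQ s hs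
    simp only [hCdef]
    linarith
  -- continuity
  have hcont : ContinuousOn
      (fun s : ℝ => 1 / Real.sqrt (v₀ ^ 2 - l * s ^ 2 + 2 * a / (p + 1) * s ^ (p + 1)))
      (Set.Ioi 0) := by
    have hQc : ContinuousOn
        (fun s : ℝ => v₀ ^ 2 - l * s ^ 2 + 2 * a / (p + 1) * s ^ (p + 1)) (Set.Ioi 0) := by
      apply ContinuousOn.add
      · exact (continuousOn_const.sub (continuousOn_const.mul (by fun_prop)))
      · exact continuousOn_const.mul (fun x hx =>
          (Real.continuousAt_rpow_const x (p + 1) (Or.inl (ne_of_gt hx))).continuousWithinAt)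
    apply ContinuousOn.div continuousOn_const (Real.continuous_sqrt.comp_continuousOn hQc)
    intro x hx
    exact (Real.sqrt_pos.2 (lt_of_lt_of_le hC (hQpos x (le_of_lt hx)))).ne'
  set T : ℝ := max 1 ((l * (p + 1) / a) ^ (1 / (p - 1))) with hTdef
  have hTpos : (0:ℝ) < T := lt_of_lt_of_le one_pos (le_max_left _ _)
  -- tail bound
  have htail : ∀ s : ℝ, T ≤ s →
      a / (p + 1) * s ^ (p + 1) ≤ v₀ ^ 2 - l * s ^ 2 + 2 * a / (p + 1) * s ^ (p + 1) := by
    intro s hsT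
    have hs0 : (0:ℝ) < s := lt_of_lt_of_le hTpos hsT
    have h1 : l * (p + 1) / a ≤ s ^ (p - 1) := by
      calc l * (p + 1) / a = ((l * (p + 1) / a) ^ (1 / (p - 1))) ^ (p - 1) := by
            rw [← Real.rpow_mul (by positivity), one_div, inv_mul_cancel₀ hpm.ne',
              Real.rpow_one]
        _ ≤ s ^ (p - 1) := Real.rpow_le_rpow (by positivity)
            (le_trans (le_max_right _ _) hsT) hpm.le
    have h2 : s ^ (p + 1) = s ^ (p - 1) * s ^ (2:ℕ) := by
      rw [← Real.rpow_natCast s 2, ← Real.rpow_add hs0,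
        show p - 1 + ((2:ℕ):ℝ) = p + 1 by push_cast; ring]
    have h3 : l * s ^ 2 ≤ a / (p + 1) * s ^ (p + 1) := by
      have hmono := mul_le_mul_of_nonneg_right h1 (sq_nonneg s)
      have hmono2 := mul_le_mul_of_nonneg_left hmono (by positivity : (0:ℝ) ≤ a / (p + 1))
      rw [h2]
      calc l * s ^ 2 = a / (p + 1) * (l * (p + 1) / a * s ^ 2) := by field_simp
        _ ≤ a / (p + 1) * (s ^ (p - 1) * s ^ 2) := hmono2
        _ = a / (p + 1) * (s ^ (p - 1) * s ^ (2:ℕ)) := by norm_num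
    have he : 2 * a / (p + 1) * s ^ (p + 1)
        = a / (p + 1) * s ^ (p + 1) + a / (p + 1) * s ^ (p + 1) := by ring
    rw [he]
    nlinarith [sq_nonneg v₀, h3]
  -- integrability on (0, T]
  have hInt1 : IntegrableOn
      (fun s : ℝ => 1 / Real.sqrt (v₀ ^ 2 - l * s ^ 2 + 2 * a / (p + 1) * s ^ (p + 1)))
      (Set.Ioc 0 T) := by
    apply Integrable.mono' (g := fun _ : ℝ => 1 / Real.sqrt C)
    · exact (integrableOn_const measure_Ioc_lt_top.ne)
    · exact (hcont.mono Set.Ioc_subset_Ioi_self).aestronglyMeasurable measurableSet_Ioc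
    · refine (ae_restrict_iff' measurableSet_Ioc).2 (Filter.Eventually.of_forall ?_)
      intro s hs
      have hQ := hQpos s hs.1.le
      have hsq : (0:ℝ) < Real.sqrt (v₀ ^ 2 - l * s ^ 2 + 2 * a / (p + 1) * s ^ (p + 1)) :=
        Real.sqrt_pos.2 (lt_of_lt_of_le hC hQ)
      rw [Real.norm_eq_abs, abs_of_nonneg (by positivity)]
      exact one_div_le_one_div_of_le (Real.sqrt_pos.2 hC) (Real.sqrt_le_sqrt hQ)
  -- integrability on (T, ∞)
  have hInt2 : IntegrableOn
      (fun s : ℝ => 1 / Real.sqrt (v₀ ^ 2 - l * s ^ 2 + 2 * a / (p + 1) * s ^ (p + 1)))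
      (Set.Ioi T) := by
    have hg : IntegrableOn (fun s : ℝ => Real.sqrt ((p + 1) / a) * s ^ (-(p + 1) / 2))
        (Set.Ioi T) :=
      ((integrableOn_Ioi_rpow_iff hTpos).2 (by linarith)).const_mul _
    apply Integrable.mono' hg
    · exact (hcont.mono (Set.Ioi_subset_Ioi hTpos.le)).aestronglyMeasurable measurableSet_Ioi
    · refine (ae_restrict_iff' measurableSet_Ioi).2 (Filter.Eventually.of_forall ?_)
      intro s hs
      have hsT : T ≤ s := le_of_lt hs
      have hs0 : (0:ℝ) < s := lt_of_lt_of_le hTpos hsT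
      have hQ := htail s hsT
      have hb : (0:ℝ) < a / (p + 1) * s ^ (p + 1) := by positivity
      have hle : 1 / Real.sqrt (v₀ ^ 2 - l * s ^ 2 + 2 * a / (p + 1) * s ^ (p + 1))
          ≤ 1 / Real.sqrt (a / (p + 1) * s ^ (p + 1)) :=
        one_div_le_one_div_of_le (Real.sqrt_pos.2 hb) (Real.sqrt_le_sqrt hQ)
      have heq : 1 / Real.sqrt (a / (p + 1) * s ^ (p + 1))
          = Real.sqrt ((p + 1) / a) * s ^ (-(p + 1) / 2) := by
        rw [Real.sqrt_mul (by positivity) (s ^ (p + 1)),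
          Real.sqrt_eq_rpow (s ^ (p + 1)), ← Real.rpow_mul hs0.le,
          one_div, mul_inv, ← Real.sqrt_inv, inv_div,
          ← Real.rpow_neg hs0.le,
          show -((p + 1) * (1 / 2 : ℝ)) = -(p + 1) / 2 by ring]
      rw [Real.norm_eq_abs, abs_of_nonneg (by positivity)]
      rw [← heq]
      exact hle
  rw [← Set.Ioc_union_Ioi_eq_Ioi hTpos.le]
  exact hInt1.union hInt2
end

section
/- For p > 1, a > 0, λ ≤ 0, T_D(v₀) = ∫₀^∞ ds / sqrt(v₀² − λs² + (2a/(p+1))s^{p+1}) tends to 0 as v₀ → +∞. -/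
open Real MeasureTheory Filter

/-- For `p > 1`, `a > 0`, `λ ≤ 0`, the blow-up time
`T_D(v₀) = ∫₀^∞ ds / sqrt(v₀² − λs² + (2a/(p+1))s^{p+1})` tends to `0`
as `v₀ → +∞`. -/
theorem stmt7 (p a l : ℝ) (hp : 1 < p) (ha : 0 < a) (hl : l ≤ 0) :
    Tendsto
      (fun v₀ : ℝ => ∫ s in Set.Ioi (0 : ℝ),
        1 / Real.sqrt (v₀ ^ 2 - l * s ^ 2 + (2 * a / (p + 1)) * s ^ (p + 1)))
      atTop (nhds 0) := by
  set c : ℝ := 2 * a / (p + 1) with hc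
  have hp1 : (0:ℝ) < p + 1 := by linarith
  have hcpos : 0 < c := div_pos (by linarith) hp1
  -- the dominating function
  set g : ℝ → ℝ := fun s => 1 / Real.sqrt (1 + c * s ^ (p + 1)) with hg
  -- measurability
  have hmeas : ∀ v₀ : ℝ, AEStronglyMeasurable
      (fun s => 1 / Real.sqrt (v₀ ^ 2 - l * s ^ 2 + c * s ^ (p + 1)))
      (volume.restrict (Set.Ioi (0:ℝ))) := by
    intro v₀
    apply Measurable.aestronglyMeasurable
    exact Measurable.div measurable_const
      ((measurable_const.sub ((measurable_id.pow_const 2).const_mul l)).add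
        (((Real.continuous_rpow_const hp1.le).measurable).const_mul c)).sqrt
  -- integrability of the dominating function
  have hgint : IntegrableOn g (Set.Ioi (0:ℝ)) := by
    have hsplit : Set.Ioc (0:ℝ) 1 ∪ Set.Ioi (1:ℝ) = Set.Ioi (0:ℝ) :=
      Set.Ioc_union_Ioi_eq_Ioi zero_le_one
    rw [← hsplit]
    apply IntegrableOn.union
    · -- on (0,1], bounded by 1
      apply Measure.integrableOn_of_bounded (M := 1)
      · simp [Real.volume_Ioc]
      · apply Measurable.aestronglyMeasurable
        exact Measurable.div measurable_const
          (measurable_const.add (((Real.continuous_rpow_const hp1.le).measurable).const_mul c)).sqrt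
      · filter_upwards [ae_restrict_mem measurableSet_Ioc] with s hs
        have hs0 : 0 < s := hs.1
        have h1 : (1:ℝ) ≤ 1 + c * s ^ (p + 1) := by
          have : 0 ≤ c * s ^ (p + 1) :=
            mul_nonneg hcpos.le (Real.rpow_nonneg hs0.le _)
          linarith
        have hsq : (1:ℝ) ≤ Real.sqrt (1 + c * s ^ (p + 1)) := by
          have := Real.sqrt_le_sqrt h1
          simpa using this
        have hpos : 0 < Real.sqrt (1 + c * s ^ (p + 1)) := lt_of_lt_of_le one_pos hsq
        rw [Real.norm_of_nonneg (by positivity)]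
        rw [div_le_one hpos]
        exact hsq
    · -- on (1,∞), bounded by (1/√c) * s ^ (-(p+1)/2)
      have hr : -(p + 1) / 2 < -1 := by linarith
      have hint : IntegrableOn (fun s : ℝ => (1 / Real.sqrt c) * s ^ (-(p + 1) / 2))
          (Set.Ioi (1:ℝ)) :=
        (integrableOn_Ioi_rpow_of_lt hr one_pos).const_mul _
      apply hint.mono'
      · apply Measurable.aestronglyMeasurable
        exact Measurable.div measurable_const
          (measurable_const.add (((Real.continuous_rpow_const hp1.le).measurable).const_mul c)).sqrt
      · filter_upwards [ae_restrict_mem measurableSet_Ioi] with s hs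
        have hs0 : (0:ℝ) < s := lt_trans one_pos hs
        have hrpow : 0 < s ^ (p + 1) := Real.rpow_pos_of_pos hs0 _
        have key : Real.sqrt (c * s ^ (p + 1)) ≤ Real.sqrt (1 + c * s ^ (p + 1)) := by
          apply Real.sqrt_le_sqrt; linarith
        have hpos : 0 < Real.sqrt (c * s ^ (p + 1)) := by
          apply Real.sqrt_pos.mpr; positivity
        have hval : Real.sqrt (c * s ^ (p + 1)) = Real.sqrt c * s ^ ((p + 1) / 2) := by
          rw [Real.sqrt_mul hcpos.le]
          congr 1
          rw [Real.sqrt_eq_rpow, ← Real.rpow_mul hs0.le]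
          congr 1
          ring
        rw [Real.norm_of_nonneg (by positivity)]
        calc 1 / Real.sqrt (1 + c * s ^ (p + 1))
            ≤ 1 / Real.sqrt (c * s ^ (p + 1)) :=
              one_div_le_one_div_of_le hpos key
          _ = (1 / Real.sqrt c) * s ^ (-(p + 1) / 2) := by
              rw [hval, show -(p+1)/2 = -((p+1)/2) by ring,
                Real.rpow_neg hs0.le, one_div, one_div, mul_inv]
  -- eventual bound
  have hbound : ∀ᶠ v₀ : ℝ in atTop, ∀ᵐ s ∂(volume.restrict (Set.Ioi (0:ℝ))),
      ‖1 / Real.sqrt (v₀ ^ 2 - l * s ^ 2 + c * s ^ (p + 1))‖ ≤ g s := by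
    filter_upwards [eventually_ge_atTop (1:ℝ)] with v₀ hv
    filter_upwards [ae_restrict_mem measurableSet_Ioi] with s hs
    have hs0 : (0:ℝ) < s := hs
    have hls : l * s ^ 2 ≤ 0 := mul_nonpos_of_nonpos_of_nonneg hl (sq_nonneg s)
    have hv2 : (1:ℝ) ≤ v₀ ^ 2 := by nlinarith
    have h1 : 1 + c * s ^ (p + 1) ≤ v₀ ^ 2 - l * s ^ 2 + c * s ^ (p + 1) := by linarith
    have hrpow : 0 ≤ c * s ^ (p + 1) :=
      mul_nonneg hcpos.le (Real.rpow_nonneg hs0.le _)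
    have hpos1 : (0:ℝ) < Real.sqrt (1 + c * s ^ (p + 1)) := by
      apply Real.sqrt_pos.mpr; linarith
    rw [Real.norm_of_nonneg (by positivity)]
    exact one_div_le_one_div_of_le hpos1 (Real.sqrt_le_sqrt h1)
  -- pointwise limit
  have hlim : ∀ᵐ s ∂(volume.restrict (Set.Ioi (0:ℝ))),
      Tendsto (fun v₀ : ℝ => 1 / Real.sqrt (v₀ ^ 2 - l * s ^ 2 + c * s ^ (p + 1)))
        atTop (nhds 0) := by
    filter_upwards [ae_restrict_mem measurableSet_Ioi] with s hs
    have hs0 : (0:ℝ) < s := hs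
    have hls : l * s ^ 2 ≤ 0 := mul_nonpos_of_nonpos_of_nonneg hl (sq_nonneg s)
    have hrpow : 0 ≤ c * s ^ (p + 1) :=
      mul_nonneg hcpos.le (Real.rpow_nonneg hs0.le _)
    apply squeeze_zero' (g := fun v₀ : ℝ => 1 / v₀)
    · filter_upwards with v₀; positivity
    · filter_upwards [eventually_ge_atTop (1:ℝ)] with v₀ hv
      have hv0 : (0:ℝ) < v₀ := lt_of_lt_of_le one_pos hv
      have h1 : v₀ ≤ Real.sqrt (v₀ ^ 2 - l * s ^ 2 + c * s ^ (p + 1)) := by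
        rw [Real.le_sqrt' hv0]; linarith
      exact one_div_le_one_div_of_le hv0 h1
    · simpa [one_div] using tendsto_inv_atTop_zero
  have := MeasureTheory.tendsto_integral_filter_of_dominated_convergence
    (μ := volume.restrict (Set.Ioi (0:ℝ)))
    (F := fun v₀ : ℝ => fun s => 1 / Real.sqrt (v₀ ^ 2 - l * s ^ 2 + c * s ^ (p + 1)))
    (f := fun _ => (0:ℝ)) g (Eventually.of_forall hmeas) hbound hgint hlim
  simpa using this
end

section
/- For p > 1, a > 0, λ > 0 and u₀ > u₀* = (λ/a)^{1/(p−1)}, the improper integral T_N(u₀) = ∫₁^∞ dθ / sqrt((2a/(p+1))u₀^{p−1}(θ^{p+1} − 1) − λ(θ² − 1)) is finite, and the integrand's denominator is positive for all θ > 1. -/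
open Real MeasureTheory

/-- For `p > 1`, `a > 0`, `λ > 0` and `u₀ > u₀* = (λ/a)^{1/(p−1)}`, the denominator
`(2a/(p+1))u₀^{p−1}(θ^{p+1} − 1) − λ(θ² − 1)` is positive for `θ > 1` and the
integral `∫₁^∞ dθ / sqrt(...)` is finite. -/
theorem stmt8 (p a l u₀ : ℝ) (hp : 1 < p) (ha : 0 < a) (hl : 0 < l)
    (hu₀ : (l / a) ^ (1 / (p - 1)) < u₀) :
    (∀ θ : ℝ, 1 < θ →
      0 < (2 * a / (p + 1)) * u₀ ^ (p - 1) * (θ ^ (p + 1) - 1) - l * (θ ^ 2 - 1)) ∧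
    IntegrableOn
      (fun θ : ℝ => 1 / Real.sqrt
        ((2 * a / (p + 1)) * u₀ ^ (p - 1) * (θ ^ (p + 1) - 1) - l * (θ ^ 2 - 1)))
      (Set.Ioi 1) := by
  have hp1 : (0:ℝ) < p + 1 := by linarith
  have hp2 : (0:ℝ) < p - 1 := by linarith
  have hla : 0 < l / a := div_pos hl ha
  have hu₀pos : 0 < u₀ := lt_trans (Real.rpow_pos_of_pos hla _) hu₀
  have key : l / a < u₀ ^ (p - 1) := by
    have h1 := Real.rpow_lt_rpow (le_of_lt (Real.rpow_pos_of_pos hla _)) hu₀ hp2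
    rwa [← Real.rpow_mul hla.le, one_div, inv_mul_cancel₀ (ne_of_gt hp2), Real.rpow_one] at h1
  have hu₀p : 0 < u₀ ^ (p - 1) := Real.rpow_pos_of_pos hu₀pos _
  have hm : 0 < a * u₀ ^ (p - 1) - l := by
    have h2 := (div_lt_iff₀ ha).mp key
    nlinarith
  set δ := 2 / (p + 1) * (a * u₀ ^ (p - 1) - l) with hδ
  have hδpos : 0 < δ := by positivity
  -- Bernoulli: for θ ≥ 1, ((p+1)/2)*(θ²-1) ≤ θ^(p+1) - 1
  have bern : ∀ θ : ℝ, 1 ≤ θ → (p + 1) / 2 * (θ ^ 2 - 1) ≤ θ ^ (p + 1) - 1 := by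
    intro θ hθ
    have hθ0 : (0:ℝ) ≤ θ := by linarith
    have hs : (-1:ℝ) ≤ θ ^ 2 - 1 := by nlinarith
    have hexp : (1:ℝ) ≤ (p + 1) / 2 := by linarith
    have hB := one_add_mul_self_le_rpow_one_add hs hexp
    have h1 : (1 + (θ ^ 2 - 1)) ^ ((p + 1) / 2) = θ ^ (p + 1) := by
      have e1 : (1 : ℝ) + (θ ^ 2 - 1) = θ ^ ((2:ℕ) : ℝ) := by
        rw [Real.rpow_natCast]; ring
      rw [e1, ← Real.rpow_mul hθ0, show ((2:ℕ):ℝ) * ((p + 1) / 2) = p + 1 by push_cast; ring]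
    rw [h1] at hB
    linarith
  -- lower bound: δ * (θ^(p+1) - 1) ≤ h θ for θ ≥ 1
  have hb : ∀ θ : ℝ, 1 ≤ θ →
      δ * (θ ^ (p + 1) - 1) ≤
        (2 * a / (p + 1)) * u₀ ^ (p - 1) * (θ ^ (p + 1) - 1) - l * (θ ^ 2 - 1) := by
    intro θ hθ
    have hbern := bern θ hθ
    have e : (2 * a / (p + 1)) * u₀ ^ (p - 1) = δ + 2 * l / (p + 1) := by
      rw [hδ]; field_simp; ring
    rw [e]
    have h3 : l * (θ ^ 2 - 1) ≤ 2 * l / (p + 1) * (θ ^ (p + 1) - 1) := by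
      have h2 : (0:ℝ) < 2 * l / (p + 1) := by positivity
      calc l * (θ ^ 2 - 1) = (2 * l / (p + 1)) * ((p + 1) / 2 * (θ ^ 2 - 1)) := by
            field_simp
        _ ≤ (2 * l / (p + 1)) * (θ ^ (p + 1) - 1) :=
            mul_le_mul_of_nonneg_left hbern h2.le
    nlinarith [h3]
  -- θ ≤ θ^(p+1) for θ ≥ 1
  have hpow : ∀ θ : ℝ, 1 ≤ θ → θ ≤ θ ^ (p + 1) := by
    intro θ hθ
    calc θ = θ ^ (1:ℝ) := (Real.rpow_one θ).symm
      _ ≤ θ ^ (p + 1) := Real.rpow_le_rpow_of_exponent_le hθ (by linarith)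
  -- positivity
  have hpos : ∀ θ : ℝ, 1 < θ →
      0 < (2 * a / (p + 1)) * u₀ ^ (p - 1) * (θ ^ (p + 1) - 1) - l * (θ ^ 2 - 1) := by
    intro θ hθ
    have h4 : 1 < θ ^ (p + 1) := lt_of_lt_of_le hθ (hpow θ hθ.le)
    have h5 := hb θ hθ.le
    nlinarith
  refine ⟨hpos, ?_⟩
  set f : ℝ → ℝ := fun θ : ℝ => 1 / Real.sqrt
      ((2 * a / (p + 1)) * u₀ ^ (p - 1) * (θ ^ (p + 1) - 1) - l * (θ ^ 2 - 1)) with hf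
  -- continuity of f on Ioi 1
  have hcont : ContinuousOn f (Set.Ioi 1) := by
    apply ContinuousOn.div continuousOn_const
    · apply ContinuousOn.sqrt
      apply ContinuousOn.sub
      · exact continuousOn_const.mul
          ((ContinuousOn.rpow_const continuousOn_id
            (fun x hx => Or.inl (by rintro rfl; simp at hx; linarith))).sub continuousOn_const)
      · exact continuousOn_const.mul ((continuousOn_pow 2).sub continuousOn_const)
    · intro x hx
      exact (Real.sqrt_pos.mpr (hpos x hx)).ne'
  have hsplit : Set.Ioi (1:ℝ) = Set.Ioc 1 2 ∪ Set.Ioi 2 :=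
    (Set.Ioc_union_Ioi_eq_Ioi (by norm_num)).symm
  rw [hsplit]
  apply MeasureTheory.IntegrableOn.union
  · -- on Ioc 1 2 : dominate by (sqrt δ)⁻¹ * (θ-1)^(-1/2)
    have hg : IntegrableOn (fun θ : ℝ => (Real.sqrt δ)⁻¹ * (θ - 1) ^ (-(1/2) : ℝ))
        (Set.Ioc 1 2) := by
      have h6 : IntervalIntegrable (fun x : ℝ => x ^ (-(1/2) : ℝ)) volume 0 1 :=
        intervalIntegral.intervalIntegrable_rpow' (by norm_num)
      have h7 := (h6.comp_sub_right 1)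
      simp only [zero_add] at h7
      have h8 : IntegrableOn (fun θ : ℝ => (θ - 1) ^ (-(1/2) : ℝ)) (Set.Ioc 1 2) := by
        have := h7.1
        rwa [show (1:ℝ) + 1 = 2 by norm_num] at this
      exact h8.const_mul _
    apply Integrable.mono' hg
    · exact (hcont.mono (fun x hx => hx.1)).aestronglyMeasurable measurableSet_Ioc
    · rw [ae_restrict_iff' measurableSet_Ioc]
      filter_upwards with θ hθ
      have hθ1 : 1 < θ := hθ.1
      have hlow : δ * (θ - 1) ≤
          (2 * a / (p + 1)) * u₀ ^ (p - 1) * (θ ^ (p + 1) - 1) - l * (θ ^ 2 - 1) := by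
        have := hb θ hθ1.le
        have := hpow θ hθ1.le
        nlinarith
      have hδθ : 0 < δ * (θ - 1) := by
        have : 0 < θ - 1 := by linarith
        positivity
      have hnorm : ‖f θ‖ = f θ := by
        rw [Real.norm_eq_abs, abs_of_nonneg]
        rw [hf]; positivity
      rw [hnorm, hf]
      simp only
      rw [one_div]
      have hsq : Real.sqrt (δ * (θ - 1)) ≤
          Real.sqrt ((2 * a / (p + 1)) * u₀ ^ (p - 1) * (θ ^ (p + 1) - 1) - l * (θ ^ 2 - 1)) :=
        Real.sqrt_le_sqrt hlow
      calc (Real.sqrt ((2 * a / (p + 1)) * u₀ ^ (p - 1) * (θ ^ (p + 1) - 1)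
              - l * (θ ^ 2 - 1)))⁻¹
          ≤ (Real.sqrt (δ * (θ - 1)))⁻¹ := by
            apply inv_anti₀ (Real.sqrt_pos.mpr hδθ) hsq
        _ = (Real.sqrt δ)⁻¹ * (θ - 1) ^ (-(1/2) : ℝ) := by
            rw [Real.sqrt_mul hδpos.le, mul_inv, Real.rpow_neg (by linarith : (0:ℝ) ≤ θ - 1),
              Real.sqrt_eq_rpow δ, Real.sqrt_eq_rpow (θ - 1)]
  · -- on Ioi 2 : dominate by (sqrt (δ/2))⁻¹ * θ^(-(p+1)/2)
    have hg : IntegrableOn (fun θ : ℝ => (Real.sqrt (δ/2))⁻¹ * θ ^ (-((p + 1) / 2)))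
        (Set.Ioi 2) := by
      have h9 : IntegrableOn (fun θ : ℝ => θ ^ (-((p + 1) / 2))) (Set.Ioi 2) :=
        integrableOn_Ioi_rpow_of_lt (by linarith) (by norm_num)
      exact h9.const_mul _
    apply Integrable.mono' hg
    · exact (hcont.mono (fun x (hx : x ∈ Set.Ioi (2:ℝ)) => Set.mem_Ioi.mpr (lt_trans one_lt_two hx))).aestronglyMeasurable
        measurableSet_Ioi
    · rw [ae_restrict_iff' measurableSet_Ioi]
      filter_upwards with θ hθ
      have hθ2 : (2:ℝ) < θ := hθ
      have hθ1 : (1:ℝ) ≤ θ := by linarith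
      have hθ0 : (0:ℝ) ≤ θ := by linarith
      have hgeq2 : (2:ℝ) ≤ θ ^ (p + 1) := le_trans hθ2.le (hpow θ hθ1)
      have hlow : δ / 2 * θ ^ (p + 1) ≤
          (2 * a / (p + 1)) * u₀ ^ (p - 1) * (θ ^ (p + 1) - 1) - l * (θ ^ 2 - 1) := by
        have := hb θ hθ1
        nlinarith
      have hδθ : 0 < δ / 2 * θ ^ (p + 1) := by
        have : (0:ℝ) < θ ^ (p + 1) := by linarith
        positivity
      have hnorm : ‖f θ‖ = f θ := by
        rw [Real.norm_eq_abs, abs_of_nonneg]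
        rw [hf]; positivity
      rw [hnorm, hf]
      simp only
      rw [one_div]
      have hsq : Real.sqrt (δ / 2 * θ ^ (p + 1)) ≤
          Real.sqrt ((2 * a / (p + 1)) * u₀ ^ (p - 1) * (θ ^ (p + 1) - 1) - l * (θ ^ 2 - 1)) :=
        Real.sqrt_le_sqrt hlow
      calc (Real.sqrt ((2 * a / (p + 1)) * u₀ ^ (p - 1) * (θ ^ (p + 1) - 1)
              - l * (θ ^ 2 - 1)))⁻¹
          ≤ (Real.sqrt (δ / 2 * θ ^ (p + 1)))⁻¹ := by
            apply inv_anti₀ (Real.sqrt_pos.mpr hδθ) hsq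
        _ = (Real.sqrt (δ/2))⁻¹ * θ ^ (-((p + 1) / 2)) := by
            rw [Real.sqrt_mul (by positivity : (0:ℝ) ≤ δ/2), mul_inv,
              Real.sqrt_eq_rpow (θ ^ (p + 1)), ← Real.rpow_mul hθ0,
              show (p + 1) * (1/2) = (p + 1) / 2 by ring, Real.rpow_neg hθ0]
end
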